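/- Fix n ≥ 1, ν > 0 and σ ∈ (0,1/2). There exist constants C > 0 and c > 0 such that for every t ≥ 0 and every ξ ∈ ℝⁿ with 0 < |ξ| ≤ ρ: |∂ₜ( 𝒥₁(t,ξ) − e^{−(t/ν)|ξ|^{2(1−σ)}} )| ≤ C e^{−c(1+t)|ξ|^{2(1−σ)}} ( t|ξ|^{2(3−4σ)} + |ξ|^{2(2−3σ)} ) and |∂ₜ( 𝒥₂(t,ξ) − e^{−(t/ν)|ξ|^{2(1−σ)}}/(ν|ξ|^{2σ}) )| ≤ C e^{−c(1+t)|ξ|^{2(1−σ)}} ( t|ξ|^{2(3−5σ)} + |ξ|^{4(1−2σ)} ), where ∂ₜ denotes the derivative in t. -/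

import Mathlib

set_option maxHeartbeats 800000 in
/-- Low-frequency approximation of the time derivatives of `𝒥₁` and `𝒥₂` by the time
derivatives of the parabolic kernels, for `σ ∈ (0,1/2)`. -/
theorem stmt7 (n : ℕ) (hn : 1 ≤ n) (ν σ : ℝ) (hν : 0 < ν)
    (hσ : σ ∈ Set.Ioo (0:ℝ) (1/2)) (ρ : ℝ)
    (hρ : ρ = (1/2) * (ν/2) ^ ((1:ℝ)/(1 - 2*σ)))
    (lp lm : EuclideanSpace ℝ (Fin n) → ℝ)
    (hlp : ∀ ξ, lp ξ = -(ν/2) * ‖ξ‖ ^ (2*σ) + Real.sqrt (ν^2/4 * ‖ξ‖ ^ (4*σ) - ‖ξ‖^2))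
    (hlm : ∀ ξ, lm ξ = -(ν/2) * ‖ξ‖ ^ (2*σ) - Real.sqrt (ν^2/4 * ‖ξ‖ ^ (4*σ) - ‖ξ‖^2)) :
    ∃ C > 0, ∃ c > 0, ∀ t : ℝ, 0 ≤ t →
      ∀ ξ : EuclideanSpace ℝ (Fin n), 0 < ‖ξ‖ → ‖ξ‖ ≤ ρ →
        |deriv (fun s => -(lm ξ) * Real.exp (lp ξ * s) / (lp ξ - lm ξ) -
            Real.exp (-(s/ν) * ‖ξ‖ ^ (2*(1 - σ)))) t|
            ≤ C * Real.exp (-c * (1 + t) * ‖ξ‖ ^ (2*(1 - σ))) *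
              (t * ‖ξ‖ ^ (2*(3 - 4*σ)) + ‖ξ‖ ^ (2*(2 - 3*σ))) ∧
        |deriv (fun s => Real.exp (lp ξ * s) / (lp ξ - lm ξ) -
            Real.exp (-(s/ν) * ‖ξ‖ ^ (2*(1 - σ))) / (ν * ‖ξ‖ ^ (2*σ))) t|
            ≤ C * Real.exp (-c * (1 + t) * ‖ξ‖ ^ (2*(1 - σ))) *
              (t * ‖ξ‖ ^ (2*(3 - 5*σ)) + ‖ξ‖ ^ (4*(1 - 2*σ))) := by
  obtain ⟨hσ0, hσ2⟩ := hσ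
  have hσ2' : 0 < 1 - 2*σ := by linarith
  have hν2 : (0:ℝ) < ν/2 := by linarith
  have hρ0 : 0 < ρ := by
    rw [hρ]; positivity
  set δ : ℝ := 1 - (1/2:ℝ) ^ ((2:ℝ) - 4*σ) with hδdef
  have hhalf : (0:ℝ) < (1/2:ℝ) ^ ((2:ℝ) - 4*σ) := Real.rpow_pos_of_pos (by norm_num) _
  have hδ0 : 0 < δ := by
    have : (1/2:ℝ) ^ ((2:ℝ) - 4*σ) < 1 :=
      Real.rpow_lt_one (by norm_num) (by norm_num) (by linarith)
    rw [hδdef]; linarith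
  have hδ1 : δ < 1 := by rw [hδdef]; linarith
  have hsδ : 0 < Real.sqrt δ := Real.sqrt_pos.mpr hδ0
  set Kρ : ℝ := ρ ^ (2*(1 - σ)) with hKρdef
  set E : ℝ := Real.exp (Kρ / ν) with hEdef
  have hE : 0 < E := Real.exp_pos _
  set S : ℝ := 4/(ν^3*Real.sqrt δ) + 4/ν^4 + 8/(Real.sqrt δ*ν^4) + 4/ν^5 with hSdef
  have hcA : 0 < 4/(ν^3*Real.sqrt δ) := by positivity
  have hcB : 0 < 4/ν^4 := by positivity
  have hcC : 0 < 8/(Real.sqrt δ*ν^4) := by positivity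
  have hcD : 0 < 4/ν^5 := by positivity
  have hS : 0 < S := by rw [hSdef]; positivity
  refine ⟨E * S, mul_pos hE hS, 1/ν, by positivity, ?_⟩
  intro t ht ξ hξ hξρ
  set r : ℝ := ‖ξ‖ with hrdef
  have hr : 0 < r := hξ
  -- basic power quantities
  set s2 : ℝ := r ^ (2*σ) with hs2def
  have hs2 : 0 < s2 := Real.rpow_pos_of_pos hr _
  set K : ℝ := r ^ (2*(1 - σ)) with hKdef
  have hK0 : 0 < K := Real.rpow_pos_of_pos hr _
  set Y1 : ℝ := r ^ (2*(2 - 3*σ)) with hY1def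
  set X1 : ℝ := r ^ (2*(3 - 4*σ)) with hX1def
  set X2 : ℝ := r ^ (2*(3 - 5*σ)) with hX2def
  set Y2 : ℝ := r ^ (4*(1 - 2*σ)) with hY2def
  have hY1 : 0 < Y1 := Real.rpow_pos_of_pos hr _
  have hX1 : 0 < X1 := Real.rpow_pos_of_pos hr _
  have hX2 : 0 < X2 := Real.rpow_pos_of_pos hr _
  have hY2 : 0 < Y2 := Real.rpow_pos_of_pos hr _
  have hr2 : (0:ℝ) < r^2 := by positivity
  have hr2eq : (r:ℝ)^(2:ℕ) = r ^ ((2:ℝ)) := (Real.rpow_two r).symm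
  have hr4eq : (r:ℝ)^2 * r^2 = r ^ ((4:ℝ)) := by
    rw [show (4:ℝ) = ((4:ℕ):ℝ) by norm_num, Real.rpow_natCast]; ring
  -- rpow identities
  have hs2sq : s2 * s2 = r ^ (4*σ) := by
    rw [hs2def, ← Real.rpow_add hr]; ring_nf
  have hKs2 : s2 * K = r^2 := by
    rw [hs2def, hKdef, ← Real.rpow_add hr, hr2eq]; ring_nf
  have idY1 : Y1 * (s2*s2*s2) = r^2 * r^2 := by
    rw [hY1def, hs2def, hr4eq, ← Real.rpow_add hr, ← Real.rpow_add hr, ← Real.rpow_add hr]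
    ring_nf
  have idX1 : K * Y1 = X1 := by
    rw [hKdef, hY1def, hX1def, ← Real.rpow_add hr]; ring_nf
  have idY2 : Y2 * (s2*s2*s2*s2) = r^2 * r^2 := by
    rw [hY2def, hs2def, hr4eq, ← Real.rpow_add hr, ← Real.rpow_add hr, ← Real.rpow_add hr,
      ← Real.rpow_add hr]
    ring_nf
  have idX2 : X2 * (s2*s2) = r^2 * Y1 := by
    rw [hX2def, hs2def, hY1def, hr2eq, ← Real.rpow_add hr, ← Real.rpow_add hr,
      ← Real.rpow_add hr]
    ring_nf
  have hKbd : K ≤ Kρ := by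
    rw [hKdef, hKρdef]
    exact Real.rpow_le_rpow hr.le hξρ (by linarith)
  have hsmall0 : r ^ ((2:ℝ) - 4*σ) ≤ (1-δ) * (ν/2)^2 := by
    have e1 : r ^ ((2:ℝ) - 4*σ) ≤ ρ ^ ((2:ℝ) - 4*σ) :=
      Real.rpow_le_rpow hr.le hξρ (by linarith)
    have e2 : ρ ^ ((2:ℝ)-4*σ) = (1-δ) * (ν/2)^2 := by
      rw [hρ, Real.mul_rpow (by norm_num) (Real.rpow_pos_of_pos hν2 _).le,
        ← Real.rpow_mul hν2.le,
        show (1:ℝ)/(1-2*σ)*((2:ℝ)-4*σ) = 2 by field_simp; ring,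
        Real.rpow_two, hδdef]
      ring
    exact e2 ▸ e1
  have e3 : r^2 = r ^ ((2:ℝ)-4*σ) * (s2 * s2) := by
    rw [hs2sq, ← Real.rpow_add hr, hr2eq]; ring_nf
  -- make everything opaque
  clear_value r s2 K Y1 X1 X2 Y2
  -- a and D
  set a : ℝ := ν/2 * s2 with hadef
  have ha : 0 < a := mul_pos hν2 hs2
  set Dsq : ℝ := ν^2/4 * r ^ (4*σ) - r^2 with hDsqdef
  have hDsqeq : Dsq = a^2 - r^2 := by
    rw [hDsqdef, hadef, ← hs2sq]; ring
  clear_value a Dsq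
  have hsmall : r^2 ≤ (1-δ) * a^2 := by
    have e4 : a^2 = (ν/2)^2 * (s2*s2) := by rw [hadef]; ring
    rw [e3, e4]
    linarith only [mul_le_mul_of_nonneg_right hsmall0 (mul_nonneg hs2.le hs2.le)]
  have hDsq : δ * a^2 ≤ Dsq := by rw [hDsqeq]; linarith only [hsmall]
  have hDsq0 : 0 < Dsq := lt_of_lt_of_le (mul_pos hδ0 (pow_pos ha 2)) hDsq
  set D : ℝ := Real.sqrt Dsq with hDdef
  have hD0 : 0 < D := Real.sqrt_pos.mpr hDsq0
  have hD2 : D * D = Dsq := Real.mul_self_sqrt hDsq0.le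
  have hDa : D < a := by
    rw [hDdef]
    calc Real.sqrt Dsq < Real.sqrt (a^2) :=
          Real.sqrt_lt_sqrt hDsq0.le (by rw [hDsqeq]; linarith)
    _ = a := Real.sqrt_sq ha.le
  have hδD : Real.sqrt δ * a ≤ D := by
    rw [hDdef]
    calc Real.sqrt δ * a = Real.sqrt (δ * a^2) := by
          rw [Real.sqrt_mul hδ0.le, Real.sqrt_sq ha.le]
    _ ≤ Real.sqrt Dsq := Real.sqrt_le_sqrt hDsq
  clear_value D
  have haD : 0 < a + D := by linarith
  have hconj : (a - D) * (a + D) = r^2 := by linear_combination -hDsqeq - hD2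
  have haaD : a*(a-D) ≤ r^2 := by
    linarith only [hconj, mul_nonneg hD0.le (sub_nonneg.mpr hDa.le)]
  -- lp, lm in terms of a, D
  have hlpP : lp ξ = -a + D := by
    rw [hlp ξ, hadef, hDdef, hDsqdef, hs2def, hrdef]; ring
  have hlmM : lm ξ = -a - D := by
    rw [hlm ξ, hadef, hDdef, hDsqdef, hs2def, hrdef]; ring
  have h2D : lp ξ - lm ξ = 2*D := by rw [hlpP, hlmM]; ring
  set P : ℝ := -a + D with hPdef
  -- μ
  set μ : ℝ := r^2/(2*a) with hμdef
  have hμpos : 0 < μ := div_pos hr2 (by linarith)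
  clear_value P μ
  have hμν : μ * ν = K := by
    rw [hμdef, hadef, div_mul_eq_mul_div,
      div_eq_iff (by positivity : (2:ℝ)*(ν/2*s2) ≠ 0)]
    linear_combination (-ν) * hKs2
  have hμK : μ = K/ν := by rw [eq_div_iff hν.ne']; exact hμν
  have hexpt : ∀ s : ℝ, -(s/ν) * K = -μ * s := by
    intro s
    rw [hμK]; field_simp
  have hPeq : P = -(r^2) / (a + D) := by
    rw [eq_div_iff haD.ne', hPdef]
    linear_combination -hconj
  have hPleμ : P ≤ -μ := by
    rw [hPeq, hμdef, neg_div, neg_le_neg_iff]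
    gcongr <;> linarith
  have hμ2D : μ ≤ r^2/(2*D) := by
    rw [hμdef]
    gcongr <;> linarith
  -- bound on -(P+μ)
  have hPμ_bound : -(P+μ) ≤ 4/ν^3 * Y1 := by
    have hRHS : 4/ν^3 * Y1 = r^2*r^2/(2*(a*a*a)) := by
      rw [hadef, show r^2*r^2 = Y1 * (s2*s2*s2) from idY1.symm]
      field_simp
      ring
    rw [hRHS]
    calc -(P+μ) = r^2*(a-D)/((a+D)*(2*a)) := by
          rw [hPeq, hμdef]; field_simp; ring
    _ ≤ r^2*(a-D)/(a*(2*a)) :=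
          div_le_div_of_nonneg_left (mul_nonneg hr2.le (sub_nonneg.mpr hDa.le))
            (mul_pos ha (by linarith)) (by linarith only [mul_pos ha hD0])
    _ ≤ r^2*r^2/(2*(a*a*a)) := by
          rw [div_le_div_iff₀ (mul_pos ha (by linarith)) (by positivity)]
          linarith only [mul_le_mul_of_nonneg_left haaD
            (le_of_lt (mul_pos hr2 (mul_pos ha ha)))]
  -- bound r^2/(2D) - μ
  have hA1 : r^2/(2*D) - μ ≤ 4/(ν^3*Real.sqrt δ) * Y1 := by
    have hRHS : 4/(ν^3*Real.sqrt δ) * Y1 = r^2*r^2/(2*Real.sqrt δ*(a*a*a)) := by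
      rw [hadef, show r^2*r^2 = Y1 * (s2*s2*s2) from idY1.symm]
      field_simp
      ring
    rw [hRHS]
    calc r^2/(2*D) - μ = r^2*(a-D)/(2*(D*a)) := by
          rw [hμdef]; field_simp
    _ ≤ r^2*(a-D)/(2*((Real.sqrt δ*a)*a)) :=
          div_le_div_of_nonneg_left (mul_nonneg hr2.le (sub_nonneg.mpr hDa.le))
            (by positivity)
            (by linarith only [mul_le_mul_of_nonneg_right hδD ha.le])
    _ ≤ r^2*r^2/(2*Real.sqrt δ*(a*a*a)) := by
          rw [div_le_div_iff₀ (by positivity) (by positivity)]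
          linarith only [mul_le_mul_of_nonneg_left haaD
            (le_of_lt (mul_pos (mul_pos (mul_pos (by norm_num : (0:ℝ)<2) hsδ) (mul_pos ha ha)) hr2))]
  -- two-sided bound on P/(2D) + μ/(ν s2)
  have h2a : ν * s2 = 2*a := by rw [hadef]; ring
  have habs : |P/(2*D) + μ/(ν*s2)| ≤ 8/(Real.sqrt δ*ν^4) * Y2 := by
    have hRHS : 8/(Real.sqrt δ*ν^4) * Y2 = r^2*r^2/(2*Real.sqrt δ*(a*a*a*a)) := by
      rw [hadef, show r^2*r^2 = Y2 * (s2*s2*s2*s2) from idY2.symm]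
      field_simp
      ring
    have hval2 : P/(2*D) + μ/(ν*s2) = r^2/(4*(a*a)) - r^2/(2*(D*(a+D))) := by
      rw [hPeq, hμdef, h2a]
      field_simp
      ring
    rw [hRHS, hval2, abs_le]
    have hw : 4*(a*a) - 2*(D*(a+D)) = 2*(a*(a-D)) + 2*r^2 := by
      linear_combination (-2)*hD2 - 2*hDsqeq
    have hmul : Real.sqrt δ*a*a ≤ D*(a+D) := by
      calc Real.sqrt δ*a*a ≤ D*a := mul_le_mul_of_nonneg_right hδD ha.le
      _ ≤ D*(a+D) := by linarith only [mul_pos hD0 hD0]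
    constructor
    · rw [neg_le, neg_sub]
      calc r^2/(2*(D*(a+D))) - r^2/(4*(a*a))
          = r^2*(4*(a*a) - 2*(D*(a+D)))/((2*(D*(a+D)))*(4*(a*a))) := by
            field_simp
      _ ≤ (r^2*(4*r^2))/((2*((Real.sqrt δ*a)*a))*(4*(a*a))) := by
            apply div_le_div₀ (by positivity)
            · have : 4*(a*a) - 2*(D*(a+D)) ≤ 4*r^2 := by linarith only [hw, haaD]
              exact mul_le_mul_of_nonneg_left this hr2.le
            · positivity
            · have := mul_le_mul_of_nonneg_right hmul
                (le_of_lt (by positivity : (0:ℝ) < 8*(a*a)))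
              linarith only [this]
      _ = r^2*r^2/(2*Real.sqrt δ*(a*a*a*a)) := by
            field_simp
    · have hle : r^2/(4*(a*a)) - r^2/(2*(D*(a+D))) ≤ 0 := by
        rw [sub_nonpos]
        have g1 : D*a ≤ a*a := mul_le_mul_of_nonneg_right hDa.le ha.le
        have g2 : D*D ≤ a*a := mul_le_mul hDa.le hDa.le hD0.le ha.le
        exact div_le_div_of_nonneg_left hr2.le
          (mul_pos (by norm_num : (0:ℝ)<2) (mul_pos hD0 haD))
          (by linarith only [g1, g2])
      have h0 : (0:ℝ) ≤ r^2*r^2/(2*Real.sqrt δ*(a*a*a*a)) := by positivity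
      linarith
  -- exponential estimates
  have hexp1 : Real.exp (P*t) ≤ Real.exp (-μ*t) :=
    Real.exp_le_exp.mpr (by calc P*t ≤ -μ*t := mul_le_mul_of_nonneg_right hPleμ ht)
  have hgap : Real.exp (-μ*t) - Real.exp (P*t) ≤ (-(P+μ)*t) * Real.exp (-μ*t) := by
    have hsplit : Real.exp (P*t) = Real.exp (-μ*t) * Real.exp ((P+μ)*t) := by
      rw [← Real.exp_add]; congr 1; ring
    have h1 : 1 - Real.exp ((P+μ)*t) ≤ -(P+μ)*t := by
      linarith only [Real.add_one_le_exp ((P+μ)*t)]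
    calc Real.exp (-μ*t) - Real.exp (P*t)
        = Real.exp (-μ*t) * (1 - Real.exp ((P+μ)*t)) := by rw [hsplit]; ring
    _ ≤ Real.exp (-μ*t) * (-(P+μ)*t) :=
        mul_le_mul_of_nonneg_left h1 (Real.exp_pos _).le
    _ = (-(P+μ)*t) * Real.exp (-μ*t) := by ring
  have hgap0 : 0 ≤ Real.exp (-μ*t) - Real.exp (P*t) := by linarith [hexp1]
  have hexpfac : Real.exp (-μ*t) ≤ E * Real.exp (-(1/ν)*(1+t)*K) := by
    rw [hEdef, ← Real.exp_add]
    apply Real.exp_le_exp.mpr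
    have h0 : 0 ≤ (Kρ - K)/ν := div_nonneg (by linarith [hKbd]) hν.le
    have hident : Kρ/ν + (-(1/ν)*(1+t)*K) - (-μ*t) = (Kρ - K)/ν := by
      rw [hμK]; field_simp; ring
    linarith
  have hμ2D' : (0:ℝ) ≤ r^2/(2*D) - μ := by linarith [hμ2D]
  constructor
  · -- first estimate
    have h₁ : HasDerivAt (fun s : ℝ => lp ξ * s) (lp ξ) t := by
      simpa using (hasDerivAt_id t).const_mul (lp ξ)
    have h₂ := h₁.exp
    have h₃ := (h₂.const_mul (-lm ξ)).div_const (lp ξ - lm ξ)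
    have h₄ : HasDerivAt (fun s : ℝ => -(s/ν) * K) (-(1/ν) * K) t := by
      simpa using (((hasDerivAt_id t).div_const ν).neg.mul_const K)
    have h₅ := h₄.exp
    rw [HasDerivAt.deriv (f := fun s => -lm ξ * Real.exp (lp ξ * s) / (lp ξ - lm ξ) - Real.exp (-(s / ν) * K)) (h₃.sub h₅)]
    rw [hexpt t, show -(1/ν) * K = -μ by rw [hμK]; field_simp]
    have hnum : -lm ξ * (Real.exp (lp ξ * t) * lp ξ) = -(r^2) * Real.exp (lp ξ * t) := by
      rw [hlpP, hlmM, hPdef]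
      linear_combination (-(Real.exp ((-a+D)*t))) * hconj
    have hG1 : -lm ξ * (Real.exp (lp ξ * t) * lp ξ) / (lp ξ - lm ξ) - Real.exp (-μ*t) * (-μ)
        = -((r^2/(2*D) - μ) * Real.exp (P*t)) + μ * (Real.exp (-μ*t) - Real.exp (P*t)) := by
      rw [hnum, h2D, hlpP]
      field_simp
      ring
    rw [hG1]
    have hstep : |(-((r^2/(2*D) - μ) * Real.exp (P*t)) + μ * (Real.exp (-μ*t) - Real.exp (P*t)))|
        ≤ (r^2/(2*D) - μ) * Real.exp (-μ*t) + μ * ((-(P+μ)*t) * Real.exp (-μ*t)) := by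
      refine (abs_add_le _ _).trans ?_
      rw [abs_neg, abs_mul, abs_mul, abs_of_nonneg hμ2D',
        abs_of_nonneg (Real.exp_pos _).le, abs_of_nonneg hμpos.le, abs_of_nonneg hgap0]
      have e1 := mul_le_mul_of_nonneg_left hexp1 hμ2D'
      have e2 := mul_le_mul_of_nonneg_left hgap hμpos.le
      linarith
    refine hstep.trans ?_
    have hterm1 : (r^2/(2*D) - μ) * Real.exp (-μ*t) ≤ (4/(ν^3*Real.sqrt δ) * Y1) * Real.exp (-μ*t) :=
      mul_le_mul_of_nonneg_right hA1 (Real.exp_pos _).le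
    have hterm2 : μ * ((-(P+μ)*t) * Real.exp (-μ*t)) ≤ (4/ν^4 * X1) * (t * Real.exp (-μ*t)) := by
      have hc : μ * (-(P+μ)) ≤ 4/ν^4 * X1 := by
        calc μ * (-(P+μ)) ≤ μ * (4/ν^3 * Y1) :=
              mul_le_mul_of_nonneg_left hPμ_bound hμpos.le
        _ = 4/ν^4 * X1 := by
            rw [← idX1, ← hμν]
            field_simp
      have h0 : 0 ≤ t * Real.exp (-μ*t) := mul_nonneg ht (Real.exp_pos _).le
      calc μ * ((-(P+μ)*t) * Real.exp (-μ*t)) = (μ * (-(P+μ))) * (t * Real.exp (-μ*t)) := by ring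
      _ ≤ (4/ν^4 * X1) * (t * Real.exp (-μ*t)) := mul_le_mul_of_nonneg_right hc h0
    calc (r^2/(2*D) - μ) * Real.exp (-μ*t) + μ * ((-(P+μ)*t) * Real.exp (-μ*t))
        ≤ Real.exp (-μ*t) * (4/(ν^3*Real.sqrt δ) * Y1 + 4/ν^4 * (t*X1)) := by
          rw [show Real.exp (-μ*t) * (4/(ν^3*Real.sqrt δ) * Y1 + 4/ν^4 * (t*X1))
            = (4/(ν^3*Real.sqrt δ) * Y1) * Real.exp (-μ*t) + (4/ν^4 * X1) * (t * Real.exp (-μ*t)) by ring]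
          linarith
    _ ≤ (E * Real.exp (-(1/ν)*(1+t)*K)) * (4/(ν^3*Real.sqrt δ) * Y1 + 4/ν^4 * (t*X1)) := by
          apply mul_le_mul_of_nonneg_right hexpfac
          exact add_nonneg (mul_nonneg hcA.le hY1.le)
            (mul_nonneg hcB.le (mul_nonneg ht hX1.le))
    _ ≤ E * S * Real.exp (-(1/ν)*(1+t)*K) * (t * X1 + Y1) := by
          have hinner : 4/(ν^3*Real.sqrt δ) * Y1 + 4/ν^4 * (t*X1) ≤ S * (t * X1 + Y1) := by
            have p1 : 4/(ν^3*Real.sqrt δ) * Y1 ≤ S * Y1 := by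
              apply mul_le_mul_of_nonneg_right _ hY1.le
              rw [hSdef]; linarith
            have p2 : 4/ν^4 * (t*X1) ≤ S * (t*X1) := by
              apply mul_le_mul_of_nonneg_right _ (mul_nonneg ht hX1.le)
              rw [hSdef]; linarith
            calc 4/(ν^3*Real.sqrt δ) * Y1 + 4/ν^4 * (t*X1) ≤ S * Y1 + S * (t*X1) :=
                  add_le_add p1 p2
            _ = S * (t * X1 + Y1) := by ring
          calc (E * Real.exp (-(1/ν)*(1+t)*K)) * (4/(ν^3*Real.sqrt δ) * Y1 + 4/ν^4 * (t*X1))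
              ≤ (E * Real.exp (-(1/ν)*(1+t)*K)) * (S * (t * X1 + Y1)) :=
                mul_le_mul_of_nonneg_left hinner
                  (mul_nonneg hE.le (Real.exp_pos _).le)
          _ = E * S * Real.exp (-(1/ν)*(1+t)*K) * (t * X1 + Y1) := by ring
  · -- second estimate
    have h₁ : HasDerivAt (fun s : ℝ => lp ξ * s) (lp ξ) t := by
      simpa using (hasDerivAt_id t).const_mul (lp ξ)
    have h₂ := h₁.exp
    have h₃ := h₂.div_const (lp ξ - lm ξ)
    have h₄ : HasDerivAt (fun s : ℝ => -(s/ν) * K) (-(1/ν) * K) t := by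
      simpa using (((hasDerivAt_id t).div_const ν).neg.mul_const K)
    have h₅ := (h₄.exp).div_const (ν * s2)
    rw [HasDerivAt.deriv (f := fun s => Real.exp (lp ξ * s) / (lp ξ - lm ξ) - Real.exp (-(s / ν) * K) / (ν * s2)) (h₃.sub h₅)]
    rw [hexpt t, show -(1/ν) * K = -μ by rw [hμK]; field_simp]
    have hG2 : Real.exp (lp ξ * t) * lp ξ / (lp ξ - lm ξ) - Real.exp (-μ*t) * (-μ) / (ν*s2)
        = (P/(2*D) + μ/(ν*s2)) * Real.exp (P*t)
          + (μ/(ν*s2)) * (Real.exp (-μ*t) - Real.exp (P*t)) := by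
      rw [h2D, hlpP]
      field_simp
      ring
    rw [hG2]
    have hμs2pos : 0 < μ/(ν*s2) := div_pos hμpos (mul_pos hν hs2)
    have hstep : |(P/(2*D) + μ/(ν*s2)) * Real.exp (P*t)
          + (μ/(ν*s2)) * (Real.exp (-μ*t) - Real.exp (P*t))|
        ≤ (8/(Real.sqrt δ*ν^4) * Y2) * Real.exp (-μ*t)
          + (μ/(ν*s2)) * ((-(P+μ)*t) * Real.exp (-μ*t)) := by
      refine (abs_add_le _ _).trans ?_
      have e1 : |(P/(2*D) + μ/(ν*s2)) * Real.exp (P*t)| ≤ (8/(Real.sqrt δ*ν^4) * Y2) * Real.exp (-μ*t) := by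
        rw [abs_mul, abs_of_nonneg (Real.exp_pos _).le]
        calc |P/(2*D) + μ/(ν*s2)| * Real.exp (P*t)
            ≤ (8/(Real.sqrt δ*ν^4) * Y2) * Real.exp (P*t) :=
              mul_le_mul_of_nonneg_right habs (Real.exp_pos _).le
        _ ≤ (8/(Real.sqrt δ*ν^4) * Y2) * Real.exp (-μ*t) :=
              mul_le_mul_of_nonneg_left hexp1 (mul_nonneg hcC.le hY2.le)
      have e2 : |(μ/(ν*s2)) * (Real.exp (-μ*t) - Real.exp (P*t))|
          ≤ (μ/(ν*s2)) * ((-(P+μ)*t) * Real.exp (-μ*t)) := by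
        rw [abs_mul, abs_of_nonneg hμs2pos.le, abs_of_nonneg hgap0]
        exact mul_le_mul_of_nonneg_left hgap hμs2pos.le
      linarith
    refine hstep.trans ?_
    have hterm2 : (μ/(ν*s2)) * ((-(P+μ)*t) * Real.exp (-μ*t)) ≤ (4/ν^5 * X2) * (t * Real.exp (-μ*t)) := by
      have hc : (μ/(ν*s2)) * (-(P+μ)) ≤ 4/ν^5 * X2 := by
        calc (μ/(ν*s2)) * (-(P+μ)) ≤ (μ/(ν*s2)) * (4/ν^3 * Y1) :=
              mul_le_mul_of_nonneg_left hPμ_bound hμs2pos.le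
        _ = 4/ν^5 * X2 := by
            rw [hμdef, hadef]
            rw [show (4:ℝ)/ν^5 * X2 = 4/ν^5 * (X2 * (s2*s2)) / (s2*s2) by
              field_simp, idX2]
            field_simp
      have h0 : 0 ≤ t * Real.exp (-μ*t) := mul_nonneg ht (Real.exp_pos _).le
      calc (μ/(ν*s2)) * ((-(P+μ)*t) * Real.exp (-μ*t))
          = ((μ/(ν*s2)) * (-(P+μ))) * (t * Real.exp (-μ*t)) := by ring
      _ ≤ (4/ν^5 * X2) * (t * Real.exp (-μ*t)) := mul_le_mul_of_nonneg_right hc h0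
    calc (8/(Real.sqrt δ*ν^4) * Y2) * Real.exp (-μ*t) + (μ/(ν*s2)) * ((-(P+μ)*t) * Real.exp (-μ*t))
        ≤ Real.exp (-μ*t) * (8/(Real.sqrt δ*ν^4) * Y2 + 4/ν^5 * (t*X2)) := by
          rw [show Real.exp (-μ*t) * (8/(Real.sqrt δ*ν^4) * Y2 + 4/ν^5 * (t*X2))
            = (8/(Real.sqrt δ*ν^4) * Y2) * Real.exp (-μ*t) + (4/ν^5 * X2) * (t * Real.exp (-μ*t)) by ring]
          linarith
    _ ≤ (E * Real.exp (-(1/ν)*(1+t)*K)) * (8/(Real.sqrt δ*ν^4) * Y2 + 4/ν^5 * (t*X2)) := by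
          apply mul_le_mul_of_nonneg_right hexpfac
          exact add_nonneg (mul_nonneg hcC.le hY2.le)
            (mul_nonneg hcD.le (mul_nonneg ht hX2.le))
    _ ≤ E * S * Real.exp (-(1/ν)*(1+t)*K) * (t * X2 + Y2) := by
          have hinner : 8/(Real.sqrt δ*ν^4) * Y2 + 4/ν^5 * (t*X2) ≤ S * (t * X2 + Y2) := by
            have p1 : 8/(Real.sqrt δ*ν^4) * Y2 ≤ S * Y2 := by
              apply mul_le_mul_of_nonneg_right _ hY2.le
              rw [hSdef]; linarith
            have p2 : 4/ν^5 * (t*X2) ≤ S * (t*X2) := by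
              apply mul_le_mul_of_nonneg_right _ (mul_nonneg ht hX2.le)
              rw [hSdef]; linarith
            calc 8/(Real.sqrt δ*ν^4) * Y2 + 4/ν^5 * (t*X2) ≤ S * Y2 + S * (t*X2) :=
                  add_le_add p1 p2
            _ = S * (t * X2 + Y2) := by ring
          calc (E * Real.exp (-(1/ν)*(1+t)*K)) * (8/(Real.sqrt δ*ν^4) * Y2 + 4/ν^5 * (t*X2))
              ≤ (E * Real.exp (-(1/ν)*(1+t)*K)) * (S * (t * X2 + Y2)) :=
                mul_le_mul_of_nonneg_left hinner
                  (mul_nonneg hE.le (Real.exp_pos _).le)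
          _ = E * S * Real.exp (-(1/ν)*(1+t)*K) * (t * X2 + Y2) := by ring
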